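/- Let A be a unital C*-algebra, n a natural number, and (p_{ij})_{i,j ∈ Fin n} a matrix of projections in A. Then the matrix is formally unitary, i.e. ∑_{j} p_{ji}·p_{jk} = (if i = k then 1 else 0) for all i, k and ∑_{j} p_{ij}·p_{kj} = (if i = k then 1 else 0) for all i, k, if and only if every row and every column is a partition of unity, i.e. ∑_{j} p_{ij} = 1 for every i and ∑_{i} p_{ij} = 1 for every j. -/
import Mathlib


/-- A projection in a unital C*-algebra: a self-adjoint idempotent. -/
def IsProjection {A : Type*} [Ring A] [StarRing A] (a : A) : Prop :=
  IsSelfAdjoint a ∧ a * a = a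

/-- Projections summing to 1 are pairwise orthogonal. -/
lemma projections_sum_one_orthogonal {A : Type*} [CStarAlgebra A] {ι : Type*} [Fintype ι]
    [DecidableEq ι]
    (p : ι → A) (hp : ∀ i, IsProjection (p i)) (hsum : ∑ i, p i = 1) :
    ∀ i j, i ≠ j → p i * p j = 0 := by
  letI := CStarAlgebra.spectralOrder A
  haveI := CStarAlgebra.spectralOrderedRing A
  have main : ∀ i j, i ≠ j → p j * p i = 0 := by
    intro i j hij
    have key : ∀ k, p i * p k * p i = star (p k * p i) * (p k * p i) := by
      intro k
      rw [star_mul, (hp k).1.star_eq, (hp i).1.star_eq,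
        ← mul_assoc (p i * p k) (p k) (p i), mul_assoc (p i) (p k) (p k), (hp k).2]
    have h0 : ∑ k, p i * p k * p i = p i := by
      have : ∑ k, p i * p k * p i = (p i * ∑ k, p k) * p i := by
        rw [Finset.mul_sum, Finset.sum_mul]
      rw [this, hsum, mul_one, (hp i).2]
    have h1 : ∑ k ∈ Finset.univ.erase i, p i * p k * p i = 0 := by
      have h2 := Finset.add_sum_erase Finset.univ (fun k => p i * p k * p i)
        (Finset.mem_univ i)
      simp only [h0] at h2
      have h3 : p i * p i * p i = p i := by rw [(hp i).2, (hp i).2]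
      rw [h3] at h2
      -- h2 : p i + ∑ erase = p i
      have := add_left_cancel (a := p i) (b := ∑ k ∈ Finset.univ.erase i,
        p i * p k * p i) (c := 0) (by rw [h2, add_zero])
      exact this
    have hnn : ∀ k ∈ Finset.univ.erase i, (0 : A) ≤ p i * p k * p i := by
      intro k _
      rw [key k]
      exact star_mul_self_nonneg _
    have hz := (Finset.sum_eq_zero_iff_of_nonneg hnn).mp h1 j
      (Finset.mem_erase.mpr ⟨fun h => hij h.symm, Finset.mem_univ j⟩)
    rw [key j] at hz
    exact CStarRing.star_mul_self_eq_zero_iff _ |>.mp hz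
  intro i j hij
  exact main j i hij.symm

/-- A matrix `(p i j)` of projections in a unital C*-algebra is formally unitary, i.e.
`∑ j, p j i * p j k = δ i k` and `∑ j, p i j * p k j = δ i k` for all `i, k`, if and only
if every row and every column is a partition of unity. -/
theorem formally_unitary_iff_rows_cols_partitions {A : Type*} [CStarAlgebra A] {n : ℕ}
    (p : Fin n → Fin n → A) (hp : ∀ i j, IsProjection (p i j)) :
    ((∀ i k, ∑ j, p j i * p j k = if i = k then (1 : A) else 0) ∧
      (∀ i k, ∑ j, p i j * p k j = if i = k then (1 : A) else 0)) ↔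
      ((∀ i, ∑ j, p i j = 1) ∧ (∀ j, ∑ i, p i j = 1)) := by
  constructor
  · rintro ⟨hcol, hrow⟩
    constructor
    · intro i
      have := hrow i i
      rw [if_pos rfl] at this
      rw [← this]
      exact Finset.sum_congr rfl fun j _ => ((hp i j).2).symm
    · intro j
      have := hcol j j
      rw [if_pos rfl] at this
      rw [← this]
      exact Finset.sum_congr rfl fun i _ => ((hp i j).2).symm
  · rintro ⟨hrows, hcols⟩
    constructor
    · intro i k
      by_cases h : i = k
      · subst h
        simp only [if_pos rfl]
        rw [← hcols i]
        exact Finset.sum_congr rfl fun j _ => (hp j i).2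
      · simp only [if_neg h]
        apply Finset.sum_eq_zero
        intro j _
        exact projections_sum_one_orthogonal (p j) (hp j) (hrows j) i k h
    · intro i k
      by_cases h : i = k
      · subst h
        simp only [if_pos rfl]
        rw [← hrows i]
        exact Finset.sum_congr rfl fun j _ => (hp i j).2
      · simp only [if_neg h]
        apply Finset.sum_eq_zero
        intro j _
        exact projections_sum_one_orthogonal (fun m => p m j) (fun m => hp m j) (hcols j) i k h
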